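/- Let X_1, …, X_k with k ≥ 2 be pairwise disjoint nonempty closed subsets of Euclidean space ℝⁿ (n ≥ 1). Then the conflict set Conf(X) is nonempty. -/

import Mathlib

open Metric Set

/-- The territory of the set `X i` within the collection `X`. -/
def Ter {n k : ℕ} (X : Fin k → Set (EuclideanSpace ℝ (Fin n))) (i : Fin k) :
    Set (EuclideanSpace ℝ (Fin n)) :=
  {x | ∀ j, Metric.infDist x (X i) ≤ Metric.infDist x (X j)}

/-- The conflict set of the collection `X`. -/
def Conf {n k : ℕ} (X : Fin k → Set (EuclideanSpace ℝ (Fin n))) :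
    Set (EuclideanSpace ℝ (Fin n)) :=
  {x | ∃ i j, i ≠ j ∧ x ∈ Ter X i ∧ x ∈ Ter X j}

theorem conf_nonempty {n k : ℕ} (hn : 1 ≤ n) (hk : 2 ≤ k)
    (X : Fin k → Set (EuclideanSpace ℝ (Fin n)))
    (hdisj : ∀ i j, i ≠ j → Disjoint (X i) (X j))
    (hne : ∀ i, (X i).Nonempty)
    (hcl : ∀ i, IsClosed (X i)) :
    (Conf X).Nonempty := by
  set i0 : Fin k := ⟨0, by omega⟩
  set i1 : Fin k := ⟨1, by omega⟩
  have hi01 : i0 ≠ i1 := by simp [i0, i1, Fin.ext_iff]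
  obtain ⟨a, ha⟩ := hne i0
  obtain ⟨b, hb⟩ := hne i1
  set s : Finset (Fin k) := Finset.univ.erase i0 with hs
  have hsne : s.Nonempty := ⟨i1, Finset.mem_erase.2 ⟨hi01.symm, Finset.mem_univ _⟩⟩
  set g : EuclideanSpace ℝ (Fin n) → ℝ :=
    fun x => s.inf' hsne (fun j => infDist x (X j)) with hg
  have hgcont : Continuous g :=
    Continuous.finset_inf'_apply hsne (fun j _ => continuous_infDist_pt (X j))
  set γ : ℝ → EuclideanSpace ℝ (Fin n) := fun t => AffineMap.lineMap a b t with hγ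
  have hγcont : Continuous γ := AffineMap.lineMap_continuous
  set F : ℝ → ℝ := fun t => infDist (γ t) (X i0) - g (γ t) with hF
  have hFcont : Continuous F :=
    ((continuous_infDist_pt (X i0)).comp hγcont).sub (hgcont.comp hγcont)
  have hnotmem : ∀ j, j ≠ i0 → a ∉ X j := fun j hj hja =>
    (hdisj i0 j (Ne.symm hj)).ne_of_mem ha hja rfl
  have hF0 : F 0 < 0 := by
    have h1 : infDist (γ 0) (X i0) = 0 := by
      simp only [γ, AffineMap.lineMap_apply_zero]
      exact infDist_zero_of_mem ha
    have h2 : 0 < g (γ 0) := by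
      simp only [γ, AffineMap.lineMap_apply_zero]
      rw [hg, Finset.lt_inf'_iff]
      intro j hj
      exact ((hcl j).notMem_iff_infDist_pos (hne j)).1
        (hnotmem j (Finset.mem_erase.1 hj).1)
    simp [hF, h1]; linarith
  have hF1 : 0 < F 1 := by
    have h1 : 0 < infDist (γ 1) (X i0) := by
      simp only [γ, AffineMap.lineMap_apply_one]
      exact ((hcl i0).notMem_iff_infDist_pos (hne i0)).1
        (fun hbm => (hdisj i0 i1 hi01).ne_of_mem hbm hb rfl)
    have h2 : g (γ 1) ≤ 0 := by
      simp only [γ, AffineMap.lineMap_apply_one]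
      calc g b ≤ infDist b (X i1) :=
            Finset.inf'_le _ (Finset.mem_erase.2 ⟨hi01.symm, Finset.mem_univ _⟩)
        _ = 0 := infDist_zero_of_mem hb
    simp [hF]; linarith
  have h01 : (0:ℝ) ≤ 1 := zero_le_one
  obtain ⟨t, ht, hFt⟩ : ∃ t ∈ Icc (0:ℝ) 1, F t = 0 := by
    have := intermediate_value_Icc h01 hFcont.continuousOn
    have h0mem : (0:ℝ) ∈ Icc (F 0) (F 1) := ⟨hF0.le, hF1.le⟩
    obtain ⟨t, ht, hFt⟩ := this h0mem
    exact ⟨t, ht, hFt⟩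
  set x := γ t with hx
  have heq : infDist x (X i0) = g x := by
    have : infDist (γ t) (X i0) - g (γ t) = 0 := hFt
    linarith
  obtain ⟨j0, hj0s, hj0⟩ := Finset.exists_mem_eq_inf' hsne (fun j => infDist x (X j))
  have hj0ne : j0 ≠ i0 := (Finset.mem_erase.1 hj0s).1
  have hle : ∀ j, g x ≤ infDist x (X j) := by
    intro j
    rcases eq_or_ne j i0 with rfl | hji
    · rw [← heq]
    · exact Finset.inf'_le _ (Finset.mem_erase.2 ⟨hji, Finset.mem_univ _⟩)
  refine ⟨x, i0, j0, Ne.symm hj0ne, ?_, ?_⟩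
  · intro j; rw [heq]; exact hle j
  · intro j; rw [show infDist x (X j0) = g x from hj0.symm]; exact hle j
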